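/- Let G be a group with finite symmetric generating set X such that the set of geodesics over X is k-locally excluding for some k > 0. Then the word problem of G over X is accepted by a (deterministic) pushdown automaton; in particular the word problem of G is a context-free language. -/

import Mathlib

/-- The minimal length of a word over `X` representing `g` (the geodesic length `l_G`). -/
noncomputable def lG {G : Type*} [Group G] (X : Set G) (g : G) : ℕ :=
  sInf {n | ∃ w : List G, (∀ x ∈ w, x ∈ X) ∧ w.prod = g ∧ w.length = n}

/-- `w` is a geodesic word over `X`. -/
def Geodesic {G : Type*} [Group G] (X : Set G) (w : List G) : Prop :=
  (∀ x ∈ w, x ∈ X) ∧ w.length = lG X w.prod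

/-- `w` is a `k`-local geodesic over `X`: every subword (contiguous factor) of length
at most `k` is geodesic. -/
def LocalGeodesic {G : Type*} [Group G] (X : Set G) (k : ℕ) (w : List G) : Prop :=
  (∀ x ∈ w, x ∈ X) ∧ ∀ u : List G, u <:+: w → u.length ≤ k → Geodesic X u

/-- A language `L` of words over `X` is `k`-locally excluding: membership (among words
over `X`) is equivalent to avoiding a fixed finite set of forbidden subwords of length
at most `k`. -/
def LocallyExcluding {G : Type*} [Group G] (X : Set G) (k : ℕ) (L : Set (List G)) : Prop :=
  ∃ F : Set (List G), F.Finite ∧ (∀ f ∈ F, f.length ≤ k) ∧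
    ∀ w : List G, (∀ x ∈ w, x ∈ X) → (w ∈ L ↔ ∀ f ∈ F, ¬ f <:+: w)

/-- One step of rewriting with the set of rules `R` (replace a subword `p.1` by `p.2`). -/
def Rewrite {G : Type*} (R : Set (List G × List G)) (w w' : List G) : Prop :=
  ∃ p ∈ R, ∃ l r : List G, w = l ++ p.1 ++ r ∧ w' = l ++ p.2 ++ r

set_option linter.unusedSectionVars false

namespace WPCF

open List

/-! ### Context-free grammars with nonterminals in an arbitrary universe -/
structure Gram (T : Type*) where
  NT : Type*
  initial : NT
  rules : Finset (ContextFreeRule T NT)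

namespace Gram
variable {T : Type*}

def Produces (g : Gram T) (u v : List (Symbol T g.NT)) : Prop :=
  ∃ r ∈ g.rules, r.Rewrites u v

abbrev Derives (g : Gram T) :
    List (Symbol T g.NT) → List (Symbol T g.NT) → Prop :=
  Relation.ReflTransGen g.Produces

def Generates (g : Gram T) (s : List (Symbol T g.NT)) : Prop :=
  g.Derives [Symbol.nonterminal g.initial] s

def language (g : Gram T) : Language T :=
  { w : List T | g.Generates (w.map Symbol.terminal) }

variable {g : Gram T}

lemma Derives.refl (w : List (Symbol T g.NT)) : g.Derives w w :=
  Relation.ReflTransGen.refl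

lemma Produces.single {v w : List (Symbol T g.NT)} (hvw : g.Produces v w) : g.Derives v w :=
  Relation.ReflTransGen.single hvw

lemma Derives.trans {u v w : List (Symbol T g.NT)} (huv : g.Derives u v) (hvw : g.Derives v w) :
    g.Derives u w :=
  Relation.ReflTransGen.trans huv hvw

lemma Derives.trans_produces {u v w : List (Symbol T g.NT)}
    (huv : g.Derives u v) (hvw : g.Produces v w) : g.Derives u w :=
  huv.tail hvw

lemma Produces.append_left {v w : List (Symbol T g.NT)}
    (hvw : g.Produces v w) (p : List (Symbol T g.NT)) : g.Produces (p ++ v) (p ++ w) :=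
  match hvw with | ⟨r, hrmem, hrvw⟩ => ⟨r, hrmem, hrvw.append_left p⟩

lemma Produces.append_right {v w : List (Symbol T g.NT)}
    (hvw : g.Produces v w) (p : List (Symbol T g.NT)) : g.Produces (v ++ p) (w ++ p) :=
  match hvw with | ⟨r, hrmem, hrvw⟩ => ⟨r, hrmem, hrvw.append_right p⟩

lemma Derives.append_left {v w : List (Symbol T g.NT)}
    (hvw : g.Derives v w) (p : List (Symbol T g.NT)) : g.Derives (p ++ v) (p ++ w) := by
  induction hvw with
  | refl => rfl
  | tail _ last ih => exact ih.trans_produces (last.append_left p)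

lemma Derives.append_right {v w : List (Symbol T g.NT)}
    (hvw : g.Derives v w) (p : List (Symbol T g.NT)) : g.Derives (v ++ p) (w ++ p) := by
  induction hvw with
  | refl => rfl
  | tail _ last ih => exact ih.trans_produces (last.append_right p)

end Gram

/-! ### Generic relabeling of context-free grammars -/
section Relabel
variable {T : Type*} {N : Type*} {M : Type}

def mapSym (f : N → M) : Symbol T N → Symbol T M
  | .terminal a => .terminal a
  | .nonterminal n => .nonterminal (f n)

def mapRule (f : N → M) (r : ContextFreeRule T N) : ContextFreeRule T M :=
  ⟨f r.input, r.output.map (mapSym f)⟩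

lemma rewrites_map (f : N → M) (r : ContextFreeRule T N) {u v : List (Symbol T N)}
    (h : r.Rewrites u v) :
    (mapRule f r).Rewrites (u.map (mapSym f)) (v.map (mapSym f)) := by
  obtain ⟨p, q, rfl, rfl⟩ := h.exists_parts
  have := (mapRule f r).rewrites_of_exists_parts (p.map (mapSym f)) (q.map (mapSym f))
  simpa [mapRule, mapSym] using this

lemma rewrites_map_rev {f : N → M} (hf : Function.Injective f) (r : ContextFreeRule T N)
    {u : List (Symbol T N)} {v' : List (Symbol T M)}
    (h : (mapRule f r).Rewrites (u.map (mapSym f)) v') :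
    ∃ v, v' = v.map (mapSym f) ∧ r.Rewrites u v := by
  obtain ⟨p', q', hu, hv⟩ := h.exists_parts
  rw [List.append_assoc] at hu
  obtain ⟨p, rest, rfl, hp, hrest⟩ := List.map_eq_append_iff.1 hu
  obtain ⟨s, q, rfl, hs, hq⟩ := List.map_eq_append_iff.1 hrest
  have hs' : ∃ n, s = [Symbol.nonterminal n] ∧ f n = f r.input := by
    cases s with
    | nil => simp at hs
    | cons a t =>
      cases t with
      | cons b t' => simp at hs
      | nil =>
        cases a with
        | terminal c => simp [mapSym, mapRule] at hs
        | nonterminal n => exact ⟨n, rfl, by simpa [mapSym, mapRule] using hs⟩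
  obtain ⟨n, rfl, hn⟩ := hs'
  have hn' : n = r.input := hf hn
  subst hn'
  refine ⟨p ++ r.output ++ q, ?_, ?_⟩
  · simp [hv, ← hp, ← hq, mapRule, List.append_assoc]
  · have := r.rewrites_of_exists_parts p q
    rwa [List.append_assoc] at this

noncomputable def mapGram (g : Gram T) (f : g.NT → M) : ContextFreeGrammar T :=
  letI := Classical.decEq (ContextFreeRule T M)
  ⟨M, f g.initial, g.rules.image (mapRule f)⟩

lemma mapGram_derives (g : Gram T) (f : g.NT → M) {u v : List (Symbol T g.NT)}
    (h : g.Derives u v) :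
    (mapGram g f).Derives (u.map (mapSym f)) (v.map (mapSym f)) := by
  induction h with
  | refl => exact ContextFreeGrammar.Derives.refl _
  | tail _ hp ih =>
    obtain ⟨r, hr, hrw⟩ := hp
    refine ih.trans_produces ⟨mapRule f r, ?_, rewrites_map f r hrw⟩
    letI := Classical.decEq (ContextFreeRule T M)
    exact (Finset.mem_image_of_mem _ hr : mapRule f r ∈ g.rules.image (mapRule f))

lemma mapGram_derives_rev (g : Gram T) {f : g.NT → M} (hf : Function.Injective f)
    {u : List (Symbol T g.NT)} {v' : List (Symbol T (mapGram g f).NT)}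
    (h : (mapGram g f).Derives (u.map (mapSym f)) v') :
    ∃ v, v' = v.map (mapSym f) ∧ g.Derives u v := by
  induction h with
  | refl => exact ⟨u, rfl, Gram.Derives.refl _⟩
  | tail _ hp ih =>
    obtain ⟨w, rfl, hd⟩ := ih
    obtain ⟨r', hr', hrw⟩ := hp
    letI := Classical.decEq (ContextFreeRule T M)
    obtain ⟨r, hr, rfl⟩ := (Finset.mem_image (β := ContextFreeRule T M)).1 hr'
    obtain ⟨v, rfl, hrwv⟩ := rewrites_map_rev hf r hrw
    exact ⟨v, rfl, hd.trans_produces ⟨r, hr, hrwv⟩⟩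

lemma map_mapSym_terminals {f : N → M} :
    ∀ {v : List (Symbol T N)} {w : List T},
      v.map (mapSym f) = w.map Symbol.terminal → v = w.map Symbol.terminal := by
  intro v
  induction v with
  | nil => intro w h; cases w <;> simp_all
  | cons a t ih =>
    intro w h
    cases w with
    | nil => simp at h
    | cons b w' =>
      simp only [List.map_cons, List.cons.injEq] at h ⊢
      obtain ⟨h1, h2⟩ := h
      refine ⟨?_, ih h2⟩
      cases a with
      | terminal c => simpa [mapSym] using h1
      | nonterminal n => simp [mapSym] at h1

lemma mapGram_language (g : Gram T) {f : g.NT → M} (hf : Function.Injective f) :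
    (mapGram g f).language = g.language := by
  ext w
  constructor
  · intro hw
    have h1 : ([Symbol.nonterminal (mapGram g f).initial] : List (Symbol T (mapGram g f).NT))
        = ([Symbol.nonterminal g.initial] : List (Symbol T g.NT)).map (mapSym f) := by
      simp [mapSym, mapGram]
    have hw' : (mapGram g f).Derives (([Symbol.nonterminal g.initial] :
        List (Symbol T g.NT)).map (mapSym f)) (List.map Symbol.terminal w) := by
      exact hw
    obtain ⟨v, hv, hd⟩ := mapGram_derives_rev g hf hw'
    have : v = List.map Symbol.terminal w := map_mapSym_terminals hv.symm
    rw [this] at hd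
    exact hd
  · intro hw
    have := mapGram_derives g f (u := [Symbol.nonterminal g.initial])
      (v := List.map Symbol.terminal w) hw
    have e : (List.map Symbol.terminal w).map (mapSym (T := T) f) = List.map Symbol.terminal w := by
      rw [List.map_map]; rfl
    have h2 : (mapGram g f).Derives ([Symbol.nonterminal g.initial].map (mapSym f))
        (List.map Symbol.terminal w) := e ▸ this
    exact h2

end Relabel

/-! ### Windows -/
section Win
variable {α : Type*}

def win (W : ℕ) (l : List α) : List α := (l.reverse.take W).reverse

@[simp] lemma win_nil (W : ℕ) : win W ([] : List α) = [] := by simp [win]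

lemma win_length (W : ℕ) (l : List α) : (win W l).length = min W l.length := by
  simp [win]

lemma win_length_le (W : ℕ) (l : List α) : (win W l).length ≤ W := by
  rw [win_length]; omega

lemma win_suffix (W : ℕ) (l : List α) : win W l <:+ l := by
  refine ⟨(l.reverse.drop W).reverse, ?_⟩
  rw [win, ← List.reverse_append, List.take_append_drop, List.reverse_reverse]

lemma win_of_length_le {W : ℕ} {l : List α} (h : l.length ≤ W) : win W l = l := by
  rw [win, List.take_of_length_le (by simpa using h), List.reverse_reverse]

lemma win_append (W : ℕ) (a b : List α) : win W (a ++ b) = win W (win W a ++ b) := by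
  simp only [win, List.reverse_append, List.reverse_reverse]
  rw [List.take_append,
    List.take_append (l₁ := b.reverse) (l₂ := List.take W a.reverse),
    List.take_take, Nat.min_eq_left (Nat.sub_le W b.reverse.length)]

@[simp] lemma win_idem (W : ℕ) (l : List α) : win W (win W l) = win W l := by
  have := win_append W l []
  simpa using this.symm

end Win


/-! ### The abstract machine -/
section Machine
variable {α : Type*}

/-- Machine control states: `none` is the running state, `some (i, ρ)` means
"pop `i` more cells, then push `ρ`". -/
abbrev St (α : Type*) := Option (ℕ × List α)

abbrev Config (α : Type*) := St α × List α

variable (F : List α → α → ℕ × List α) (W : ℕ)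

/-- Transitions of the machine. -/
inductive Tr : Config α → Option α → Config α → Prop
  | inp (v : List α) (a : α) : Tr (none, v) (some a) (some (F (win W v) a), v)
  | pop (i : ℕ) (ρ z : List α) (y : α) : Tr (some (i + 1, ρ), z ++ [y]) none (some (i, ρ), z)
  | fin (ρ v : List α) : Tr (some (0, ρ), v) none (none, v ++ ρ)

/-- `Run n N c w c'`: the machine goes from `c` to `c'` in `N` steps consuming input `w`,
with every transition fired from a stack of height at least `n`. -/
inductive Run (n : ℕ) : ℕ → Config α → List α → Config α → Prop
  | refl (c : Config α) : Run n 0 c [] c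
  | step {c₁ c₂ c₃ : Config α} {ℓ : Option α} {N : ℕ} {w : List α} :
      n ≤ c₁.2.length → Tr F W c₁ ℓ c₂ → Run n N c₂ w c₃ → Run n (N + 1) c₁ (ℓ.toList ++ w) c₃

variable {F W}

lemma Run.append {n N₁ N₂ : ℕ} {c c' c'' : Config α} {w w' : List α}
    (h₁ : Run F W n N₁ c w c') (h₂ : Run F W n N₂ c' w' c'') :
    Run F W n (N₁ + N₂) c (w ++ w') c'' := by
  induction h₁ with
  | refl => simpa using h₂
  | step hle htr _ ih =>
    rw [List.append_assoc]
    simpa [Nat.succ_add] using Run.step hle htr (ih h₂)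

lemma Run.mono {n m N : ℕ} {c c' : Config α} {w : List α} (hmn : m ≤ n)
    (h : Run F W n N c w c') : Run F W m N c w c' := by
  induction h with
  | refl => exact Run.refl _
  | step hle htr _ ih => exact Run.step (le_trans hmn hle) htr ih

lemma Tr.take_eq {c c' : Config α} {ℓ : Option α} (h : Tr F W c ℓ c') {m : ℕ}
    (hm : m < c.2.length) : c.2.take m = c'.2.take m ∧ m ≤ c'.2.length := by
  cases h with
  | inp v a => exact ⟨rfl, le_of_lt hm⟩
  | pop i ρ z y =>
    have hm' : m < z.length + 1 := by simpa using hm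
    constructor
    · rw [List.take_append]
      have : m - z.length = 0 := by omega
      simp [this]
    · show m ≤ z.length
      omega
  | fin ρ v =>
    have hm' : m < v.length := hm
    constructor
    · rw [List.take_append]
      have : m - v.length = 0 := by omega
      simp [this]
    · simp only [List.length_append]; omega

/-- Splitting a run at the first time the stack height reaches `m`. -/
lemma Run.split {n N : ℕ} {c c' : Config α} {w : List α}
    (h : Run F W n N c w c') : ∀ m, n ≤ m → c'.2.length ≤ m → m ≤ c.2.length →
    ∃ N₁ N₂ s₁ w₁ w₂, N₁ + N₂ = N ∧ w = w₁ ++ w₂ ∧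
      Run F W (m + 1) N₁ c w₁ (s₁, c.2.take m) ∧ Run F W n N₂ (s₁, c.2.take m) w₂ c' := by
  induction h with
  | refl c =>
    intro m _ h1 h2
    have hm : m = c.2.length := le_antisymm h2 h1
    refine ⟨0, 0, c.1, [], [], rfl, rfl, ?_, ?_⟩
    · rw [hm, List.take_length]; exact Run.refl _
    · rw [hm, List.take_length]; exact Run.refl _
  | @step c₁ c₂ c₃ ℓ N w hle htr hrest ih =>
    intro m hnm h1 h2
    by_cases hm : c₁.2.length = m
    · refine ⟨0, N + 1, c₁.1, [], ℓ.toList ++ w, by omega, rfl, ?_, ?_⟩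
      · rw [← hm, List.take_length]; exact Run.refl _
      · rw [← hm, List.take_length]; exact Run.step hle htr hrest
    · have hml : m < c₁.2.length := lt_of_le_of_ne h2 (fun hh => hm hh.symm)
      obtain ⟨hteq, hlen2⟩ := htr.take_eq hml
      obtain ⟨N₁, N₂, s₁, w₁, w₂, hN, hw, hr1, hr2⟩ := ih m hnm h1 hlen2
      refine ⟨N₁ + 1, N₂, s₁, ℓ.toList ++ w₁, w₂, by omega, by rw [hw, List.append_assoc], ?_, ?_⟩
      · rw [hteq]; exact Run.step (by omega) htr hr1
      · rw [hteq]; exact hr2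

variable (D : ℕ)

def StOK (s : St α) : Prop := ∀ p ∈ s, p.1 ≤ D ∧ p.2.length ≤ D + 1

variable {D}

lemma Tr.stok (hd : ∀ ω a, (F ω a).1 ≤ min ω.length D) (hr : ∀ ω a, (F ω a).2.length ≤ D + 1)
    {c c' : Config α} {ℓ : Option α} (h : Tr F W c ℓ c') (hc : StOK D c.1) : StOK D c'.1 := by
  cases h with
  | inp v a =>
    intro p hp
    cases hp
    exact ⟨le_trans (hd _ _) (min_le_right _ _), hr _ _⟩
  | pop i ρ z y =>
    intro p hp
    cases hp
    obtain ⟨h1, h2⟩ := hc (i + 1, ρ) rfl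
    exact ⟨by omega, h2⟩
  | fin ρ v => intro p hp; cases hp

lemma Run.stok (hd : ∀ ω a, (F ω a).1 ≤ min ω.length D) (hr : ∀ ω a, (F ω a).2.length ≤ D + 1)
    {n N : ℕ} {c c' : Config α} {w : List α} (h : Run F W n N c w c') (hc : StOK D c.1) :
    StOK D c'.1 := by
  induction h with
  | refl => exact hc
  | step hle htr _ ih => exact ih (htr.stok hd hr hc)

end Machine


/-! ### The grammar -/
section Grammar
variable {α : Type*}

abbrev NTt (α : Type*) := St α ⊕ (St α × (List α × α) × St α)

variable (F : List α → α → ℕ × List α) (W : ℕ)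

/-- Chain of nonterminals consuming the cells of a pushed word (given reversed, topmost
cell first). -/
def mkChain (base : List α) : List α → St α → List (St α) → List (Symbol α (NTt α))
  | [], _, _ => []
  | _ :: _, _, [] => []
  | y :: rest, entry, e :: es =>
      Symbol.nonterminal (Sum.inr (entry, (win W (base ++ rest.reverse), y), e)) ::
        mkChain base rest e es

variable (D : ℕ)

def Rules : Set (ContextFreeRule α (NTt α)) :=
  {r | ∃ ω x p a, ω.length ≤ W ∧ StOK D p ∧
      r = ⟨.inr (none, (ω, x), p),
        [.terminal a, .nonterminal (.inr (some (F (win W (ω ++ [x])) a), (ω, x), p))]⟩} ∪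
  {r | ∃ ω x i ρ, ω.length ≤ W ∧ i + 1 ≤ D ∧ ρ.length ≤ D + 1 ∧
      r = ⟨.inr (some (i + 1, ρ), (ω, x), some (i, ρ)), []⟩} ∪
  {r | ∃ ω x ρ p exits, ω.length ≤ W ∧ StOK D p ∧ ρ.length ≤ D + 1 ∧
      exits.length = ρ.length ∧ (∀ e ∈ exits, StOK D e) ∧
      r = ⟨.inr (some (0, ρ), (ω, x), p),
        mkChain W (win W (ω ++ [x])) ρ.reverse none exits ++
          [.nonterminal (.inr (exits.getLastD none, (ω, x), p))]⟩} ∪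
  {r | r = ⟨.inl none, []⟩} ∪
  {r | ∃ a, r = ⟨.inl none, [.terminal a, .nonterminal (.inl (some (F [] a)))]⟩} ∪
  {r | ∃ ρ exits, ρ.length ≤ D + 1 ∧ exits.length = ρ.length ∧ (∀ e ∈ exits, StOK D e) ∧
      r = ⟨.inl (some (0, ρ)), mkChain W [] ρ.reverse none exits ++
        [.nonterminal (.inl (exits.getLastD none))]⟩}

lemma finite_bddLists {β : Type*} {S : Set β} (hS : S.Finite) (n : ℕ) :
    {l : List β | l.length ≤ n ∧ ∀ x ∈ l, x ∈ S}.Finite := by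
  induction n with
  | zero =>
    apply Set.Finite.subset (Set.finite_singleton ([] : List β))
    rintro l ⟨hl, -⟩
    rw [Set.mem_singleton_iff]
    exact List.eq_nil_of_length_eq_zero (by omega)
  | succ n ih =>
    apply Set.Finite.subset (Set.Finite.insert [] (Set.Finite.image
      (fun p : β × List β => p.1 :: p.2) (hS.prod ih)))
    rintro l ⟨hl, hmem⟩
    cases l with
    | nil => exact Set.mem_insert _ _
    | cons a t =>
      refine Set.mem_insert_of_mem _ ⟨(a, t), ⟨hmem a (by simp), ?_, ?_⟩, rfl⟩
      · show t.length ≤ n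
        simp only [List.length_cons] at hl; omega
      · exact fun x hx => hmem x (by simp [hx])

lemma finite_lenLe {β : Type*} [Finite β] (n : ℕ) : {l : List β | l.length ≤ n}.Finite := by
  have := finite_bddLists (Set.finite_univ (α := β)) n
  apply this.subset
  exact fun l hl => ⟨hl, fun x _ => Set.mem_univ x⟩

lemma stok_finite [Finite α] : {s : St α | StOK D s}.Finite := by
  apply Set.Finite.subset (Set.Finite.insert none (Set.Finite.image (fun p => some p)
    ((Set.finite_Iic D).prod (finite_lenLe (D + 1)))))
  rintro (_ | ⟨i, ρ⟩) hs
  · exact Set.mem_insert _ _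
  · exact Set.mem_insert_of_mem _ ⟨(i, ρ), ⟨(hs _ rfl).1, (hs _ rfl).2⟩, rfl⟩

lemma rules_finite [Finite α] : (Rules F W D).Finite := by
  have hW : ({ω : List α | ω.length ≤ W}).Finite := finite_lenLe W
  have hS : ({s : St α | StOK D s}).Finite := stok_finite D
  have hR : ({ρ : List α | ρ.length ≤ D + 1}).Finite := finite_lenLe (D + 1)
  have hE : ({l : List (St α) | l.length ≤ D + 1 ∧ ∀ e ∈ l, StOK D e}).Finite :=
    finite_bddLists hS (D + 1)
  have hU : (Set.univ : Set α).Finite := Set.finite_univ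
  refine Set.Finite.union (Set.Finite.union (Set.Finite.union (Set.Finite.union
    (Set.Finite.union ?_ ?_) ?_) ?_) ?_) ?_
  · apply Set.Finite.subset (Set.Finite.image
      (fun q : (List α × α) × (St α × α) =>
        (⟨.inr (none, (q.1.1, q.1.2), q.2.1),
          [.terminal q.2.2, .nonterminal (.inr (some (F (win W (q.1.1 ++ [q.1.2])) q.2.2),
            (q.1.1, q.1.2), q.2.1))]⟩ : ContextFreeRule α (NTt α)))
      (((hW.prod hU).prod (hS.prod hU))))
    rintro r ⟨ω, x, p, a, h1, h2, rfl⟩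
    exact ⟨((ω, x), (p, a)), ⟨⟨h1, trivial⟩, h2, trivial⟩, rfl⟩
  · apply Set.Finite.subset (Set.Finite.image
      (fun q : (List α × α) × (ℕ × List α) =>
        (⟨.inr (some (q.2.1 + 1, q.2.2), (q.1.1, q.1.2), some (q.2.1, q.2.2)), []⟩ :
          ContextFreeRule α (NTt α)))
      ((hW.prod hU).prod ((Set.finite_Iic D).prod hR)))
    rintro r ⟨ω, x, i, ρ, h1, h2, h3, rfl⟩
    exact ⟨((ω, x), (i, ρ)), ⟨⟨h1, trivial⟩, by simp only [Set.mem_Iic]; omega, h3⟩, rfl⟩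
  · apply Set.Finite.subset (Set.Finite.image
      (fun q : (List α × α) × (List α × St α × List (St α)) =>
        (⟨.inr (some (0, q.2.1), (q.1.1, q.1.2), q.2.2.1),
          mkChain W (win W (q.1.1 ++ [q.1.2])) q.2.1.reverse none q.2.2.2 ++
            [.nonterminal (.inr (q.2.2.2.getLastD none, (q.1.1, q.1.2), q.2.2.1))]⟩ :
          ContextFreeRule α (NTt α)))
      ((hW.prod hU).prod (hR.prod (hS.prod hE))))
    rintro r ⟨ω, x, ρ, p, exits, h1, h2, h3, h4, h5, rfl⟩
    exact ⟨((ω, x), (ρ, p, exits)), ⟨⟨h1, trivial⟩, h3, h2, show exits.length ≤ D + 1 by omega, h5⟩, rfl⟩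
  · exact (Set.finite_singleton _).subset (fun r hr => hr)
  · apply Set.Finite.subset (Set.Finite.image
      (fun a : α =>
        (⟨.inl none, [.terminal a, .nonterminal (.inl (some (F [] a)))]⟩ :
          ContextFreeRule α (NTt α))) hU)
    rintro r ⟨a, rfl⟩
    exact ⟨a, trivial, rfl⟩
  · apply Set.Finite.subset (Set.Finite.image
      (fun q : List α × List (St α) =>
        (⟨.inl (some (0, q.1)), mkChain W [] q.1.reverse none q.2 ++
          [.nonterminal (.inl (q.2.getLastD none))]⟩ : ContextFreeRule α (NTt α)))
      (hR.prod hE))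
    rintro r ⟨ρ, exits, h1, h2, h3, rfl⟩
    exact ⟨(ρ, exits), ⟨h1, show exits.length ≤ D + 1 by omega, h3⟩, rfl⟩

noncomputable def gram [Finite α] : Gram α :=
  ⟨NTt α, .inl none, (rules_finite F W D).toFinset⟩

@[simp] lemma gram_initial [Finite α] : (gram F W D).initial = Sum.inl none := rfl

lemma mem_gram_rules [Finite α] {r : ContextFreeRule α (NTt α)} :
    r ∈ (gram F W D).rules ↔ r ∈ Rules F W D := by
  exact Set.Finite.mem_toFinset _

end Grammar


/-! ### Semantics of nonterminals and soundness -/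
section Sound
variable {α : Type*}
variable (F : List α → α → ℕ × List α) (W : ℕ)

def sem : NTt α → Set (List α)
  | .inl s => {w | ∃ N, Run F W 0 N (s, []) w (none, [])}
  | .inr q => {w | ∀ u : List α, win W u = q.2.1.1 →
      ∃ N, Run F W (u.length + 1) N (q.1, u ++ [q.2.1.2]) w (q.2.2, u)}

lemma sem_inl (s : St α) :
    sem F W (.inl s) = {w | ∃ N, Run F W 0 N (s, []) w (none, [])} := rfl

lemma sem_inr (s p : St α) (ω : List α) (x : α) :
    sem F W (.inr (s, (ω, x), p)) = {w | ∀ u : List α, win W u = ω →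
      ∃ N, Run F W (u.length + 1) N (s, u ++ [x]) w (p, u)} := rfl

def itpS : Symbol α (NTt α) → Set (List α)
  | .terminal a => {[a]}
  | .nonterminal n => sem F W n

def itp : List (Symbol α (NTt α)) → Set (List α)
  | [] => {[]}
  | s :: rest => {w | ∃ w₁ w₂, w = w₁ ++ w₂ ∧ w₁ ∈ itpS F W s ∧ w₂ ∈ itp rest}

lemma itp_append {l₁ l₂ : List (Symbol α (NTt α))} {w : List α} :
    w ∈ itp F W (l₁ ++ l₂) ↔ ∃ w₁ w₂, w = w₁ ++ w₂ ∧ w₁ ∈ itp F W l₁ ∧ w₂ ∈ itp F W l₂ := by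
  induction l₁ generalizing w with
  | nil =>
    simp only [List.nil_append]
    constructor
    · intro h; exact ⟨[], w, rfl, rfl, h⟩
    · rintro ⟨w₁, w₂, rfl, h1, h2⟩
      have : w₁ = [] := h1
      simp [this, h2]
  | cons s rest ih =>
    constructor
    · rintro ⟨w₁, w₂, rfl, h1, h2⟩
      obtain ⟨v₁, v₂, rfl, hv1, hv2⟩ := ih.1 h2
      exact ⟨w₁ ++ v₁, v₂, by rw [List.append_assoc], ⟨w₁, v₁, rfl, h1, hv1⟩, hv2⟩
    · rintro ⟨w₁, w₂, rfl, ⟨v₁, v₂, rfl, hv1, hv2⟩, h2⟩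
      exact ⟨v₁, v₂ ++ w₂, by rw [List.append_assoc], hv1, ih.2 ⟨v₂, w₂, rfl, hv2, h2⟩⟩

lemma chain_sound : ∀ (ρrev : List α) (entry : St α) (exits : List (St α)) (b w : List α),
    exits.length = ρrev.length →
    w ∈ itp F W (mkChain W (win W b) ρrev entry exits) →
    ∃ N, Run F W (b.length + 1) N (entry, b ++ ρrev.reverse) w (exits.getLastD entry, b) := by
  intro ρrev
  induction ρrev with
  | nil =>
    intro entry exits b w hlen hw
    have hex : exits = [] := List.eq_nil_of_length_eq_zero hlen
    subst hex
    have : w = [] := hw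
    subst this
    exact ⟨0, by simpa using Run.refl _⟩
  | cons y rest ih =>
    intro entry exits b w hlen hw
    cases exits with
    | nil => simp at hlen
    | cons e es =>
      obtain ⟨w₁, w₂, rfl, h1, h2⟩ := hw
      have hwin : win W (b ++ rest.reverse) = win W (win W b ++ rest.reverse) :=
        win_append W b rest.reverse
      have h1' := h1 (b ++ rest.reverse) hwin
      obtain ⟨N₁, hr1⟩ := h1'
      obtain ⟨N₂, hr2⟩ := ih e es b w₂ (by simpa using hlen) h2
      have hr1' : Run F W (b.length + 1) N₁ (entry, b ++ (y :: rest).reverse) w₁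
          (e, b ++ rest.reverse) := by
        have heq : (b ++ rest.reverse) ++ [y] = b ++ (y :: rest).reverse := by
          rw [List.reverse_cons, ← List.append_assoc]
        rw [← heq]
        exact hr1.mono (by simp only [List.length_append]; omega)
      refine ⟨N₁ + N₂, ?_⟩
      rw [List.getLastD_cons]
      exact hr1'.append hr2

variable (D : ℕ)

lemma rule_sound {r : ContextFreeRule α (NTt α)} (hr : r ∈ Rules F W D) :
    itp F W r.output ⊆ sem F W r.input := by
  rcases hr with (((((⟨ω, x, p, a, hω, hp, rfl⟩ | ⟨ω, x, i, ρ, hω, hi, hρ, rfl⟩) |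
      ⟨ω, x, ρ, p, exits, hω, hp, hρ, hlen, hex, rfl⟩) | hr) | ⟨a, rfl⟩) |
      ⟨ρ, exits, hρ, hlen, hex, rfl⟩)
  · -- R1
    rintro w ⟨w₁, w₂, rfl, h1, h2⟩
    obtain ⟨v₂, v₃, rfl, hv2, hv3⟩ := h2
    have hw1 : w₁ = [a] := h1
    have hv3' : v₃ = [] := hv3
    subst hw1 hv3'
    intro u hwin
    obtain ⟨N, hrun⟩ := hv2 u hwin
    have hst : F (win W (ω ++ [x])) a = F (win W (u ++ [x])) a := by
      rw [win_append W u [x], hwin]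
    rw [hst] at hrun
    refine ⟨N + 1, ?_⟩
    have := Run.step (c₁ := (none, u ++ [x])) (ℓ := some a)
      (by simp) (Tr.inp (u ++ [x]) a) hrun
    simpa using this
  · -- R2
    rintro w hw
    have hw' : w = [] := hw
    subst hw'
    intro u hwin
    refine ⟨1, ?_⟩
    have h0 : Run F W (u.length + 1) (0 + 1) (some (i + 1, ρ), u ++ [x])
        ((none : Option α).toList ++ []) (some (i, ρ), u) :=
      Run.step (by simp) (Tr.pop i ρ u x) (Run.refl _)
    simpa using h0
  · -- R3
    rintro w hw
    rw [itp_append] at hw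
    obtain ⟨wc, wt, rfl, hc, ht⟩ := hw
    obtain ⟨w₂, w₃, rfl, hw2, hw3⟩ := ht
    have hw3' : w₃ = [] := hw3
    subst hw3'
    intro u hwin
    have hbase : win W (ω ++ [x]) = win W ((u ++ [x])) := by
      rw [win_append W u [x], hwin]
    rw [hbase] at hc
    obtain ⟨N₁, hr1⟩ := chain_sound F W ρ.reverse none exits (u ++ [x]) wc
      (by simpa using hlen) hc
    rw [List.reverse_reverse] at hr1
    obtain ⟨N₂, hr2⟩ := hw2 u hwin
    have hr1' : Run F W (u.length + 1) N₁ (none, (u ++ [x]) ++ ρ) wc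
        (exits.getLastD none, u ++ [x]) := hr1.mono (by simp)
    have hfin : Run F W (u.length + 1) (N₁ + 1) (some (0, ρ), u ++ [x]) wc
        (exits.getLastD none, u ++ [x]) := by
      have := Run.step (c₁ := (some (0, ρ), u ++ [x])) (ℓ := none)
        (by simp) (Tr.fin ρ (u ++ [x])) hr1'
      simpa using this
    refine ⟨N₁ + 1 + N₂, ?_⟩
    have := hfin.append hr2
    simpa using this
  · -- R4a
    have hr' : r = ⟨.inl none, []⟩ := hr
    subst hr'
    rintro w hw
    have hw' : w = [] := hw
    subst hw'
    exact ⟨0, Run.refl _⟩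
  · -- R4b
    rintro w ⟨w₁, w₂, rfl, h1, h2⟩
    obtain ⟨v₂, v₃, rfl, hv2, hv3⟩ := h2
    have hw1 : w₁ = [a] := h1
    have hv3' : v₃ = [] := hv3
    subst hw1 hv3'
    obtain ⟨N, hrun⟩ := hv2
    refine ⟨N + 1, ?_⟩
    have hst : F [] a = F (win W ([] : List α)) a := by rw [win_nil]
    rw [hst] at hrun
    have := Run.step (c₁ := (none, ([] : List α))) (ℓ := some a)
      (by simp) (Tr.inp [] a) hrun
    simpa using this
  · -- R5
    rintro w hw
    rw [itp_append] at hw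
    obtain ⟨wc, wt, rfl, hc, ht⟩ := hw
    obtain ⟨w₂, w₃, rfl, hw2, hw3⟩ := ht
    have hw3' : w₃ = [] := hw3
    subst hw3'
    have hc' : wc ∈ itp F W (mkChain W (win W ([] : List α)) ρ.reverse none exits) := by
      rwa [win_nil]
    obtain ⟨N₁, hr1⟩ := chain_sound F W ρ.reverse none exits [] wc
      (by simpa using hlen) hc'
    rw [List.reverse_reverse] at hr1
    obtain ⟨N₂, hr2⟩ := hw2
    have hr1' : Run F W 0 N₁ (none, ρ) wc (exits.getLastD none, []) := by
      have := hr1.mono (Nat.zero_le _)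
      simpa using this
    have hfin : Run F W 0 (N₁ + 1) (some (0, ρ), []) wc (exits.getLastD none, []) := by
      have := Run.step (c₁ := (some (0, ρ), ([] : List α))) (ℓ := none)
        (by simp) (Tr.fin ρ []) hr1'
      simpa using this
    refine ⟨N₁ + 1 + N₂, ?_⟩
    have := hfin.append hr2
    simpa using this

lemma produces_sound {u v : List (Symbol α (NTt α))} (r : ContextFreeRule α (NTt α))
    (hr : r ∈ Rules F W D) (hrw : r.Rewrites u v) : itp F W v ⊆ itp F W u := by
  obtain ⟨p, q, rfl, rfl⟩ := hrw.exists_parts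
  intro w hw
  rw [itp_append] at hw
  obtain ⟨w₁, w₂, rfl, h1, h2⟩ := hw
  rw [itp_append] at h1
  obtain ⟨v₁, v₂, rfl, hv1, hv2⟩ := h1
  rw [itp_append]
  refine ⟨v₁ ++ v₂, w₂, by rw [List.append_assoc], ?_, h2⟩
  rw [itp_append]
  exact ⟨v₁, v₂, rfl, hv1, ⟨v₂, [], by simp, rule_sound F W D hr hv2, rfl⟩⟩

lemma derives_sound [Finite α] {u v : List (Symbol α (NTt α))}
    (h : (gram F W D).Derives u v) : itp F W v ⊆ itp F W u := by
  induction h with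
  | refl => exact fun w hw => hw
  | tail _ hp ih =>
    obtain ⟨r, hrm, hrw⟩ := hp
    exact fun w hw => ih (produces_sound F W D r ((mem_gram_rules F W D).1 hrm) hrw hw)

lemma itp_terminals (w : List α) : w ∈ itp F W (w.map Symbol.terminal) := by
  induction w with
  | nil => rfl
  | cons a t ih => exact ⟨[a], t, rfl, rfl, ih⟩

lemma language_sound [Finite α] {w : List α} (h : w ∈ (gram F W D).language) :
    ∃ N, Run F W 0 N (none, []) w (none, []) := by
  have hd : (gram F W D).Derives [Symbol.nonterminal (Sum.inl none)] (w.map Symbol.terminal) := h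
  have := derives_sound F W D hd (itp_terminals F W w)
  obtain ⟨w₁, w₂, hw, h1, h2⟩ := this
  have h2' : w₂ = [] := h2
  subst h2'
  rw [List.append_nil] at hw
  subst hw
  exact h1

end Sound


/-! ### Completeness -/
section Complete
variable {α : Type*}

lemma snoc_inj {l₁ l₂ : List α} {x y : α} (h : l₁ ++ [x] = l₂ ++ [y]) : l₁ = l₂ ∧ x = y := by
  have h' := congrArg List.reverse h
  simp only [List.reverse_append, List.reverse_cons, List.reverse_nil, List.nil_append,
    List.singleton_append, List.cons.injEq] at h'
  exact ⟨List.reverse_injective h'.2, h'.1⟩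

variable (F : List α → α → ℕ × List α) (W D : ℕ)

lemma derives_rule [Finite α] {r : ContextFreeRule α (NTt α)} (hr : r ∈ Rules F W D) :
    (gram F W D).Derives [Symbol.nonterminal r.input] r.output :=
  Gram.Produces.single
    ⟨r, (mem_gram_rules F W D).2 hr, ContextFreeRule.Rewrites.input_output⟩

variable [Finite α]

/-- The main induction statement for cell triples. -/
def AStmt (N : ℕ) : Prop :=
  ∀ s : St α, ∀ u : List α, ∀ x : α, ∀ w : List α, ∀ p : St α,
    Run F W (u.length + 1) N (s, u ++ [x]) w (p, u) → StOK D s →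
    (gram F W D).Derives [Symbol.nonterminal (.inr (s, (win W u, x), p))]
      (w.map Symbol.terminal)

lemma stok_none {D : ℕ} : StOK D (none : St α) := fun p hp => by simp at hp

lemma lemC (hdb : ∀ ω a, (F ω a).1 ≤ min ω.length D)
    (hrb : ∀ ω a, (F ω a).2.length ≤ D + 1)
    (M : ℕ) (ihA : ∀ N, N ≤ M → AStmt F W D N) :
    ∀ ρ : List α, ∀ N, N ≤ M → ∀ s : St α, ∀ b w : List α, ∀ p : St α,
      Run F W (b.length + 1) N (s, b ++ ρ) w (p, b) → StOK D s →
      ∃ exits : List (St α), exits.length = ρ.length ∧ (∀ e ∈ exits, StOK D e) ∧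
        exits.getLastD s = p ∧
        (gram F W D).Derives (mkChain W (win W b) ρ.reverse s exits)
          (w.map Symbol.terminal) := by
  intro ρ
  induction ρ using List.reverseRecOn with
  | nil =>
    intro N hNM s b w p hrun hsok
    rw [List.append_nil] at hrun
    cases hrun with
    | refl =>
      refine ⟨[], rfl, by simp, rfl, ?_⟩
      show (gram F W D).Derives [] []
      exact Gram.Derives.refl _
    | step hle htr hrest =>
      exfalso
      simp only [] at hle
      omega
  | append_singleton ρ₀ y ihρ =>
    intro N hNM s b w p hrun hsok
    by_cases hρ₀ : ρ₀ = []
    · subst hρ₀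
      have hrun' : Run F W (b.length + 1) N (s, b ++ [y]) w (p, b) := by
        simpa using hrun
      have dA := ihA N hNM s b y w p hrun' hsok
      refine ⟨[p], by simp, ?_, by simp, ?_⟩
      · intro e he
        simp only [List.mem_singleton] at he
        subst he
        exact hrun'.stok hdb hrb hsok
      · have hmk : mkChain W (win W b) ([] ++ [y] : List α).reverse s [p]
            = [Symbol.nonterminal (.inr (s, (win W b, y), p))] := by
          simp [mkChain, win_idem]
        rw [hmk]
        exact dA
    · have hsplit := hrun.split (b.length + ρ₀.length)
        (by have := List.length_pos_iff.2 hρ₀; omega)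
        (by show b.length ≤ b.length + ρ₀.length; omega)
        (by show b.length + ρ₀.length ≤ (b ++ (ρ₀ ++ [y])).length; simp)
      obtain ⟨N₁, N₂, s₁, w₁, w₂, hN, rfl, hr1, hr2⟩ := hsplit
      have htake : (s, b ++ (ρ₀ ++ [y])).2.take (b.length + ρ₀.length) = b ++ ρ₀ := by
        show (b ++ (ρ₀ ++ [y])).take (b.length + ρ₀.length) = b ++ ρ₀
        rw [← List.append_assoc]
        exact List.take_left' (by simp)
      rw [htake] at hr1 hr2
      rw [← List.append_assoc] at hr1
      have hr1' : Run F W ((b ++ ρ₀).length + 1) N₁ (s, (b ++ ρ₀) ++ [y]) w₁ (s₁, b ++ ρ₀) := by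
        have h1 : (b ++ ρ₀).length + 1 = b.length + ρ₀.length + 1 := by simp
        rw [h1]
        exact hr1
      have hs₁ok : StOK D s₁ := hr1'.stok hdb hrb hsok
      have dTop := ihA N₁ (by omega) s (b ++ ρ₀) y w₁ s₁ hr1' hsok
      obtain ⟨exits₀, hlen₀, hok₀, hlast₀, dRest⟩ :=
        ihρ N₂ (by omega) s₁ b w₂ p hr2 hs₁ok
      refine ⟨s₁ :: exits₀, by simp [hlen₀], ?_, ?_, ?_⟩
      · intro e he
        rcases List.mem_cons.1 he with rfl | he
        · exact hs₁ok
        · exact hok₀ e he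
      · rw [List.getLastD_cons]
        exact hlast₀
      · have hmk : mkChain W (win W b) (ρ₀ ++ [y]).reverse s (s₁ :: exits₀)
            = Symbol.nonterminal (.inr (s, (win W (b ++ ρ₀), y), s₁)) ::
              mkChain W (win W b) ρ₀.reverse s₁ exits₀ := by
          rw [List.reverse_append, List.reverse_singleton]
          show mkChain W (win W b) (y :: ρ₀.reverse) s (s₁ :: exits₀) = _
          rw [mkChain]
          congr 3
          rw [List.reverse_reverse, ← win_append]
        rw [hmk, List.map_append]
        have d1 := dTop.append_right (mkChain W (win W b) ρ₀.reverse s₁ exits₀)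
        have d2 := dRest.append_left (w₁.map Symbol.terminal)
        exact (d1.trans d2 :)

lemma mainA (hdb : ∀ ω a, (F ω a).1 ≤ min ω.length D)
    (hrb : ∀ ω a, (F ω a).2.length ≤ D + 1) : ∀ N : ℕ, AStmt F W D N := by
  intro N
  induction N using Nat.strong_induction_on with
  | _ N ih =>
  intro s u x w p hrun hsok
  have hpok : StOK D p := hrun.stok hdb hrb hsok
  generalize hst : u ++ [x] = st at hrun
  cases hrun with
  | refl =>
    exfalso
    simpa using congrArg List.length hst
  | step hle htr hrest =>
    cases htr with
    | inp v a =>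
      subst hst
      have dA := ih _ (by omega) (some (F (win W (u ++ [x])) a)) u x _ p hrest
        (by intro q hq; cases hq; exact ⟨le_trans (hdb _ _) (min_le_right _ _), hrb _ _⟩)
      have hrule : (⟨.inr (none, (win W u, x), p),
          [.terminal a, .nonterminal (.inr (some (F (win W ((win W u) ++ [x])) a),
            (win W u, x), p))]⟩ : ContextFreeRule α (NTt α)) ∈ Rules F W D := by
        left; left; left; left; left
        exact ⟨win W u, x, p, a, win_length_le W u, hpok, rfl⟩
      have hFeq : F (win W ((win W u) ++ [x])) a = F (win W (u ++ [x])) a := by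
        rw [← win_append]
      have d0 := derives_rule F W D hrule
      rw [hFeq] at d0
      have d1 := dA.append_left [Symbol.terminal a]
      have := d0.trans d1
      simpa using this
    | pop i ρ z y =>
      obtain ⟨rfl, rfl⟩ := snoc_inj hst
      cases hrest with
      | refl =>
        have hrule : (⟨.inr (some (i + 1, ρ), (win W u, x), some (i, ρ)), []⟩ :
            ContextFreeRule α (NTt α)) ∈ Rules F W D := by
          left; left; left; left; right
          refine ⟨win W u, x, i, ρ, win_length_le W u, ?_, ?_, rfl⟩
          · exact (hsok (i + 1, ρ) rfl).1
          · exact (hsok (i + 1, ρ) rfl).2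
        have d0 := derives_rule F W D hrule
        exact d0
      | step hle₂ htr₂ hrest₂ =>
        exfalso
        have : u.length + 1 ≤ u.length := hle₂
        omega
    | fin ρ v =>
      subst hst
      have hsplit := hrest.split (u.length + 1) (le_refl _)
        (by show u.length ≤ u.length + 1; omega)
        (by show u.length + 1 ≤ ((u ++ [x]) ++ ρ).length; simp)
      obtain ⟨N₁, N₂, s₁, w₁, w₂, hN, rfl, hr1, hr2⟩ := hsplit
      have htake : (none (α := ℕ × List α), (u ++ [x]) ++ ρ).2.take (u.length + 1)
          = u ++ [x] := by
        show ((u ++ [x]) ++ ρ).take (u.length + 1) = u ++ [x]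
        exact List.take_left' (by simp)
      rw [htake] at hr1 hr2
      have hr1' : Run F W ((u ++ [x]).length + 1) N₁ (none, (u ++ [x]) ++ ρ) w₁
          (s₁, u ++ [x]) := by
        have h1 : (u ++ [x]).length + 1 = u.length + 1 + 1 := by simp
        rw [h1]
        exact hr1
      obtain ⟨exits, hexlen, hexok, hexlast, dChain⟩ := lemC F W D hdb hrb N₁
        (fun N' hN' => ih N' (by omega)) ρ N₁ (le_refl _)
        none (u ++ [x]) w₁ s₁ hr1' stok_none
      have hs₁ok : StOK D s₁ := hr1'.stok hdb hrb stok_none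
      have dT := ih N₂ (by omega) s₁ u x w₂ p hr2 hs₁ok
      have hρok := hsok (0, ρ) rfl
      have hrule : (⟨.inr (some (0, ρ), (win W u, x), p),
          mkChain W (win W ((win W u) ++ [x])) ρ.reverse none exits ++
            [.nonterminal (.inr (exits.getLastD none, (win W u, x), p))]⟩ :
          ContextFreeRule α (NTt α)) ∈ Rules F W D := by
        left; left; left; right
        exact ⟨win W u, x, ρ, p, exits, win_length_le W u, hpok, hρok.2, hexlen, hexok, rfl⟩
      have d0 := derives_rule F W D hrule
      have hbase : win W ((win W u) ++ [x]) = win W (u ++ [x]) := by rw [← win_append]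
      rw [hbase, hexlast] at d0
      have d1 := dChain.append_right [Symbol.nonterminal (.inr (s₁, (win W u, x), p))]
      have d2 := dT.append_left (w₁.map Symbol.terminal)
      have := (d0.trans d1).trans d2
      simpa using this

lemma mainB (hdb : ∀ ω a, (F ω a).1 ≤ min ω.length D)
    (hrb : ∀ ω a, (F ω a).2.length ≤ D + 1) :
    ∀ N : ℕ, ∀ s : St α, ∀ w : List α,
    Run F W 0 N (s, []) w (none, []) → StOK D s →
    (gram F W D).Derives [Symbol.nonterminal (.inl s)] (w.map Symbol.terminal) := by
  intro N
  induction N using Nat.strong_induction_on with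
  | _ N ih =>
  intro s w hrun hsok
  generalize hst : ([] : List α) = st at hrun
  cases hrun with
  | refl =>
    have hrule : (⟨.inl none, []⟩ : ContextFreeRule α (NTt α)) ∈ Rules F W D := by
      left; left; right
      rfl
    have d0 := derives_rule F W D hrule
    exact d0
  | step hle htr hrest =>
    cases htr with
    | inp v a =>
      subst hst
      have dE := ih _ (by omega) (some (F (win W ([] : List α)) a)) _ hrest
        (by intro q hq; cases hq; exact ⟨le_trans (hdb _ _) (min_le_right _ _), hrb _ _⟩)
      rw [win_nil] at dE
      have hrule : (⟨.inl none, [.terminal a, .nonterminal (.inl (some (F [] a)))]⟩ :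
          ContextFreeRule α (NTt α)) ∈ Rules F W D := by
        left; right
        exact ⟨a, rfl⟩
      have d0 := derives_rule F W D hrule
      have d1 := dE.append_left [Symbol.terminal a]
      have := d0.trans d1
      simpa using this
    | pop i ρ z y =>
      exfalso
      have := congrArg List.length hst
      simp at this
    | fin ρ v =>
      subst hst
      simp only [List.nil_append] at hrest
      have hsplit := hrest.split 0 (le_refl _)
        (by show (0 : ℕ) ≤ 0; omega)
        (by show (0 : ℕ) ≤ ρ.length; omega)
      obtain ⟨N₁, N₂, s₁, w₁, w₂, hN, hw, hr1, hr2⟩ := hsplit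
      rw [List.take_zero] at hr1 hr2
      have hr1' : Run F W (List.length ([] : List α) + 1) N₁ (none, [] ++ ρ) w₁
          (s₁, []) := by simpa using hr1
      obtain ⟨exits, hexlen, hexok, hexlast, dChain⟩ := lemC F W D hdb hrb N₁
        (fun N' hN' => mainA F W D hdb hrb N') ρ N₁ (le_refl _)
        none [] w₁ s₁ hr1' stok_none
      have hs₁ok : StOK D s₁ := hr1'.stok hdb hrb stok_none
      have dE := ih N₂ (by omega) s₁ w₂ hr2 hs₁ok
      have hρok := hsok (0, ρ) rfl
      have hrule : (⟨.inl (some (0, ρ)), mkChain W [] ρ.reverse none exits ++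
          [.nonterminal (.inl (exits.getLastD none))]⟩ :
          ContextFreeRule α (NTt α)) ∈ Rules F W D := by
        right
        exact ⟨ρ, exits, hρok.2, hexlen, hexok, rfl⟩
      have d0 := derives_rule F W D hrule
      have hwn : mkChain W ([] : List α) ρ.reverse (none : St α) exits
          = mkChain W (win W ([] : List α)) ρ.reverse none exits := by rw [win_nil]
      rw [hwn, hexlast] at d0
      have d1 := dChain.append_right [Symbol.nonterminal (.inl s₁)]
      have d2 := dE.append_left (w₁.map Symbol.terminal)
      have := (d0.trans d1).trans d2
      rw [hw]
      simpa using this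

lemma language_complete (hdb : ∀ ω a, (F ω a).1 ≤ min ω.length D)
    (hrb : ∀ ω a, (F ω a).2.length ≤ D + 1) {w : List α} {N : ℕ}
    (h : Run F W 0 N (none, []) w (none, [])) : w ∈ (gram F W D).language :=
  mainB F W D hdb hrb N none w h stok_none

end Complete


end WPCF

namespace WPCF

section Group
variable {G : Type*} [Group G] {X : Set G}

lemma lG_le_length {w : List G} (h : ∀ x ∈ w, x ∈ X) : lG X w.prod ≤ w.length :=
  Nat.sInf_le ⟨w, h, rfl, rfl⟩

lemma exists_word (hsym : ∀ x ∈ X, x⁻¹ ∈ X) (hgen : Subgroup.closure X = ⊤) (g : G) :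
    ∃ w : List G, (∀ x ∈ w, x ∈ X) ∧ w.prod = g := by
  have hg : g ∈ Subgroup.closure X := by rw [hgen]; trivial
  have hg' : g ∈ (Subgroup.closure X).toSubmonoid := hg
  rw [Subgroup.closure_toSubmonoid] at hg'
  obtain ⟨l, hl, hp⟩ := Submonoid.exists_list_of_mem_closure hg'
  refine ⟨l, ?_, hp⟩
  intro x hx
  rcases hl x hx with h | h
  · exact h
  · have h' : x⁻¹ ∈ X := Set.mem_inv.1 h
    simpa using hsym _ h'

lemma exists_geodesic (hsym : ∀ x ∈ X, x⁻¹ ∈ X) (hgen : Subgroup.closure X = ⊤) (g : G) :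
    ∃ w : List G, Geodesic X w ∧ w.prod = g := by
  have hne : {n | ∃ w : List G, (∀ x ∈ w, x ∈ X) ∧ w.prod = g ∧ w.length = n}.Nonempty := by
    obtain ⟨w, h1, h2⟩ := exists_word hsym hgen g
    exact ⟨w.length, w, h1, h2, rfl⟩
  obtain ⟨w, h1, h2, h3⟩ := Nat.sInf_mem hne
  refine ⟨w, ⟨h1, ?_⟩, h2⟩
  rw [h2]
  exact h3.symm ▸ rfl

lemma lG_one : lG X (1 : G) = 0 :=
  Nat.sInf_eq_zero.2 (Or.inl ⟨[], by simp, by simp, rfl⟩)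

lemma geodesic_nil : Geodesic X ([] : List G) := ⟨by simp, by simp [lG_one]⟩

lemma geodesic_prod_one {w : List G} (h : Geodesic X w) (hp : w.prod = 1) : w = [] := by
  have := h.2
  rw [hp, lG_one] at this
  exact List.eq_nil_of_length_eq_zero this

lemma geodesic_infix (hsym : ∀ x ∈ X, x⁻¹ ∈ X) (hgen : Subgroup.closure X = ⊤)
    {w t : List G} (hw : Geodesic X w) (ht : t <:+: w) : Geodesic X t := by
  obtain ⟨a, b, hab⟩ := ht
  subst hab
  have hXt : ∀ x ∈ t, x ∈ X := fun x hx => hw.1 x (by simp [hx])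
  refine ⟨hXt, le_antisymm ?_ (lG_le_length hXt)⟩
  by_contra hcon
  push_neg at hcon
  obtain ⟨t', ht'geo, ht'p⟩ := exists_geodesic hsym hgen t.prod
  have ht'len : t'.length = lG X t.prod := by rw [ht'geo.2, ht'p]
  have hX' : ∀ x ∈ a ++ t' ++ b, x ∈ X := by
    intro x hx
    rcases List.mem_append.1 hx with hx | hx
    · rcases List.mem_append.1 hx with hx | hx
      · exact hw.1 x (by simp [hx])
      · exact ht'geo.1 x hx
    · exact hw.1 x (by simp [hx])
  have hp' : (a ++ t' ++ b).prod = (a ++ t ++ b).prod := by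
    simp [List.prod_append, ht'p]
  have h1 := lG_le_length hX'
  rw [hp'] at h1
  have h2 := hw.2
  simp only [List.length_append] at h1 h2 ⊢
  omega

lemma lG_mul_le (hsym : ∀ x ∈ X, x⁻¹ ∈ X) (hgen : Subgroup.closure X = ⊤) (g h : G) :
    lG X (g * h) ≤ lG X g + lG X h := by
  obtain ⟨w₁, hw₁, hp₁⟩ := exists_geodesic hsym hgen g
  obtain ⟨w₂, hw₂, hp₂⟩ := exists_geodesic hsym hgen h
  have hm : lG X (w₁ ++ w₂).prod ≤ (w₁ ++ w₂).length := by
    apply lG_le_length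
    intro x hx
    rcases List.mem_append.1 hx with hx | hx
    · exact hw₁.1 x hx
    · exact hw₂.1 x hx
  rw [List.prod_append, hp₁, hp₂] at hm
  have l1 : w₁.length = lG X g := by rw [hw₁.2, hp₁]
  have l2 : w₂.length = lG X h := by rw [hw₂.2, hp₂]
  simp only [List.length_append] at hm
  omega

variable {k : ℕ}

lemma local_to_global (hle : LocallyExcluding X k {w : List G | Geodesic X w}) {w : List G}
    (hX : ∀ x ∈ w, x ∈ X) (h : ∀ t, t <:+: w → t.length ≤ k → Geodesic X t) :
    Geodesic X w := by
  obtain ⟨Fb, _, hFlen, hFc⟩ := hle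
  have hiff := hFc w hX
  rw [show (w ∈ {w : List G | Geodesic X w}) = Geodesic X w from rfl] at hiff
  rw [hiff]
  intro f hf hinf
  have hfX : ∀ x ∈ f, x ∈ X := fun x hx => hX x (hinf.sublist.subset hx)
  have hgeo : Geodesic X f := h f hinf (hFlen f hf)
  exact ((hFc f hfX).1 hgeo f hf) (List.infix_refl f)

lemma not_geodesic_bad (hle : LocallyExcluding X k {w : List G | Geodesic X w}) {w : List G}
    (hX : ∀ x ∈ w, x ∈ X) (hng : ¬ Geodesic X w) :
    ∃ f, f <:+: w ∧ f ≠ [] ∧ f.length ≤ k ∧ (∀ x ∈ f, x ∈ X) ∧ lG X f.prod < f.length := by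
  obtain ⟨Fb, _, hFlen, hFc⟩ := hle
  have hiff := hFc w hX
  rw [show (w ∈ {w : List G | Geodesic X w}) = Geodesic X w from rfl] at hiff
  have h2 : ¬ ∀ f ∈ Fb, ¬ f <:+: w := fun hh => hng (hiff.2 hh)
  push_neg at h2
  obtain ⟨f, hfF, hinf⟩ := h2
  have hfX : ∀ x ∈ f, x ∈ X := fun x hx => hX x (hinf.sublist.subset hx)
  have hfne : f ≠ [] := by
    rintro rfl
    have hnil : Geodesic X ([] : List G) := geodesic_nil
    have hiff2 := hFc [] (by simp)
    rw [show (([] : List G) ∈ {w : List G | Geodesic X w}) = Geodesic X ([] : List G)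
      from rfl] at hiff2
    exact (hiff2.1 hnil [] hfF) (List.infix_refl _)
  have hfng : ¬ Geodesic X f := by
    intro hgeo
    have hiff3 := hFc f hfX
    rw [show ((f : List G) ∈ {w : List G | Geodesic X w}) = Geodesic X f from rfl] at hiff3
    exact (hiff3.1 hgeo f hfF) (List.infix_refl f)
  have hlef : lG X f.prod ≤ f.length := lG_le_length hfX
  have hne : lG X f.prod ≠ f.length := fun hh => hfng ⟨hfX, hh.symm⟩
  exact ⟨f, hinf, hfne, hFlen f hfF, hfX, by omega⟩

lemma infix_split {β : Type*} {t A B : List β} (h : t <:+: A ++ B) :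
    t <:+: A ∨ ∃ A', A' <:+ A ∧ A'.length < t.length ∧ t <:+: A' ++ B := by
  by_cases ht0 : t = []
  · left; subst ht0; exact List.nil_infix
  obtain ⟨p, q, hpq⟩ := h
  by_cases hc : p.length + t.length ≤ A.length
  · left
    have h6 := congrArg (List.take A.length) hpq
    rw [List.take_left] at h6
    rw [List.take_append, List.take_of_length_le
      (by simp only [List.length_append]; omega)] at h6
    exact ⟨p, List.take (A.length - (p ++ t).length) q, h6⟩
  · right
    push_neg at hc
    refine ⟨A.drop p.length, List.drop_suffix _ _, ?_, ?_⟩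
    · rw [List.length_drop]
      have htpos : 0 < t.length := List.length_pos_iff.2 ht0
      omega
    · have h7 := congrArg (List.drop p.length) hpq
      rw [List.append_assoc, List.drop_left] at h7
      rw [List.drop_append] at h7
      by_cases hp : p.length ≤ A.length
      · have : p.length - A.length = 0 := by omega
        rw [this, List.drop_zero] at h7
        exact ⟨[], q, by simpa using h7⟩
      · have hA : A.drop p.length = [] := List.drop_eq_nil_of_le (by omega)
        rw [hA] at h7 ⊢
        rw [List.nil_append]
        have h9 : t ++ q = B.drop (p.length - A.length) := by
          simpa [hA] using h7
        have h8 : t <:+: B.drop (p.length - A.length) := ⟨[], q, by simp [h9]⟩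
        exact h8.trans (List.drop_suffix _ _).isInfix


lemma length_eq_of_append {a s u : List G} (h : a ++ s = u) : a.length + s.length = u.length := by
  rw [← h]; simp

/-- Lemma B: a geodesic word extended by a letter can be turned into a geodesic word by
modifying only a bounded suffix. -/
lemma lemmaB (hsym : ∀ x ∈ X, x⁻¹ ∈ X) (hgen : Subgroup.closure X = ⊤)
    (hle : LocallyExcluding X k {w : List G | Geodesic X w})
    {u : List G} (hu : Geodesic X u) {x : G} (hx : x ∈ X) :
    ∃ d r, d ≤ min u.length (2 * k) ∧ r.length ≤ 2 * k + 1 ∧ (∀ y ∈ r, y ∈ X) ∧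
      Geodesic X (u.take (u.length - d) ++ r) ∧
      (u.take (u.length - d) ++ r).prod = u.prod * x := by
  have hXu : ∀ y ∈ u, y ∈ X := hu.1
  have hXux : ∀ y ∈ u ++ [x], y ∈ X := by
    intro y hy
    rcases List.mem_append.1 hy with hy | hy
    · exact hXu y hy
    · simp only [List.mem_singleton] at hy; subst hy; exact hx
  by_cases hgeo : Geodesic X (u ++ [x])
  · refine ⟨0, [x], Nat.zero_le _, by simp, ?_, ?_, ?_⟩
    · intro y hy
      simp only [List.mem_singleton] at hy
      subst hy
      exact hx
    · simpa [Nat.sub_zero, List.take_length] using hgeo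
    · simp
  · have hlow : u.length ≤ lG X (u.prod * x) + 1 := by
      have h1 : lG X ((u.prod * x) * x⁻¹) ≤ lG X (u.prod * x) + lG X x⁻¹ :=
        lG_mul_le hsym hgen _ _
      have h2 : lG X x⁻¹ ≤ 1 := by
        have h3 : lG X ([x⁻¹] : List G).prod ≤ ([x⁻¹] : List G).length :=
          lG_le_length (by intro y hy; simp only [List.mem_singleton] at hy; subst hy
                           exact hsym x hx)
        simpa using h3
      have h3 : (u.prod * x) * x⁻¹ = u.prod := by group
      rw [h3] at h1
      have h4 := hu.2
      omega
    obtain ⟨f, hinf, hfne, hflen, hfX, hflt⟩ := not_geodesic_bad hle hXux hgeo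
    have hfnu : ¬ f <:+: u := by
      intro hcon
      have := (geodesic_infix hsym hgen hu hcon).2
      omega
    obtain ⟨a, b, hab⟩ := hinf
    have hb : b = [] := by
      rcases List.eq_nil_or_concat b with rfl | ⟨b', y, rfl⟩
      · rfl
      · exfalso
        apply hfnu
        have heq : (a ++ f ++ b') ++ [y] = u ++ [x] := by
          rw [← hab]; simp [List.append_assoc]
        obtain ⟨h1, _⟩ := snoc_inj heq
        exact ⟨a, b', h1⟩
    subst hb
    rw [List.append_nil] at hab
    have hkey : (a ++ f.dropLast) ++ [f.getLast hfne] = u ++ [x] := by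
      rw [List.append_assoc, List.dropLast_append_getLast hfne]; exact hab
    obtain ⟨hau, hlx⟩ := snoc_inj hkey
    have hsu : f.dropLast.length = f.length - 1 := by simp [List.length_dropLast]
    have hulen : a.length + f.dropLast.length = u.length := length_eq_of_append hau
    have hfpos : 1 ≤ f.length := List.length_pos_iff.2 hfne
    obtain ⟨v, hvgeo, hvprod⟩ := exists_geodesic hsym hgen f.prod
    have hvlen : v.length = lG X f.prod := by rw [hvgeo.2, hvprod]
    have hXa : ∀ y ∈ a, y ∈ X := by
      intro y hy
      exact hXu y (by rw [← hau]; exact List.mem_append_left _ hy)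
    have hw'X : ∀ y ∈ a ++ v, y ∈ X := by
      intro y hy
      rcases List.mem_append.1 hy with hy | hy
      · exact hXa y hy
      · exact hvgeo.1 y hy
    have hw'prod : (a ++ v).prod = u.prod * x := by
      rw [List.prod_append, hvprod]
      have : (a ++ f).prod = (u ++ [x]).prod := by rw [hab]
      simpa [List.prod_append] using this
    have htakea : u.take (u.length - f.dropLast.length) = a := by
      have h5 : u.length - f.dropLast.length = a.length := by omega
      rw [h5, ← hau]
      exact List.take_left
    by_cases hcase : (a ++ v).length ≤ lG X (u.prod * x)
    · have hge := lG_le_length hw'X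
      rw [hw'prod] at hge
      have hgeo' : Geodesic X (a ++ v) := ⟨hw'X, by rw [hw'prod]; omega⟩
      refine ⟨f.dropLast.length, v, by omega, by omega,
        fun y hy => hvgeo.1 y hy, ?_, ?_⟩
      · rw [htakea]; exact hgeo'
      · rw [htakea]; exact hw'prod
    · push_neg at hcase
      have hge := lG_le_length hw'X
      rw [hw'prod] at hge
      have hlen' : (a ++ v).length = a.length + v.length := by simp
      have h2b : (a ++ v).length = u.length ∧ lG X (u.prod * x) = u.length - 1 ∧
          1 ≤ u.length := by
        constructor
        · omega
        constructor
        · omega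
        · omega
      have hngw' : ¬ Geodesic X (a ++ v) := by
        intro hg
        have := hg.2
        rw [hw'prod] at this
        omega
      obtain ⟨f₂, hinf₂, hfne₂, hflen₂, hfX₂, hflt₂⟩ := not_geodesic_bad hle hw'X hngw'
      obtain ⟨al, be, hab₂⟩ := hinf₂
      have hlen₂ : al.length + f₂.length + be.length = a.length + v.length := by
        have h := congrArg List.length hab₂
        simp only [List.length_append] at h
        omega
      obtain ⟨t', ht'geo, ht'prod⟩ := exists_geodesic hsym hgen f₂.prod
      have ht'len : t'.length = lG X f₂.prod := by rw [ht'geo.2, ht'prod]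
      have hf₂pos : 1 ≤ f₂.length := List.length_pos_iff.2 hfne₂
      -- claim 1: the bad factor is not inside `a`
      have hclaim1 : a.length < al.length + f₂.length := by
        by_contra hcon
        push_neg at hcon
        have h6 := congrArg (List.take a.length) hab₂
        rw [List.take_left] at h6
        rw [List.take_append, List.take_of_length_le
          (by simp only [List.length_append]; omega)] at h6
        have hfa : f₂ <:+: a := ⟨al, List.take (a.length - (al ++ f₂).length) be, h6⟩
        have hfu : f₂ <:+: u := hfa.trans (List.IsPrefix.isInfix ⟨f.dropLast, hau⟩)
        have := (geodesic_infix hsym hgen hu hfu).2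
        omega
      -- claim 2: the bad factor is not inside `v`
      have hclaim2 : al.length < a.length := by
        by_contra hcon
        push_neg at hcon
        have h7 := congrArg (List.drop al.length) hab₂
        rw [List.append_assoc, List.drop_left] at h7
        rw [List.drop_append, List.drop_eq_nil_of_le (by omega),
          List.nil_append] at h7
        have h8 : f₂ <:+: v.drop (al.length - a.length) := ⟨[], be, by simp [h7]⟩
        have hfv : f₂ <:+: v := h8.trans (List.drop_suffix _ _).isInfix
        have := (geodesic_infix hsym hgen hvgeo hfv).2
        omega
      -- the improved word
      have hw''X : ∀ y ∈ al ++ t' ++ be, y ∈ X := by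
        intro y hy
        rcases List.mem_append.1 hy with hy | hy
        · rcases List.mem_append.1 hy with hy | hy
          · exact hw'X y (by rw [← hab₂]; simp [hy])
          · exact ht'geo.1 y hy
        · exact hw'X y (by rw [← hab₂]; simp [hy])
      have hw''prod : (al ++ t' ++ be).prod = u.prod * x := by
        have h9 : (al ++ f₂ ++ be).prod = u.prod * x := by rw [hab₂, hw'prod]
        simp only [List.prod_append] at h9 ⊢
        rw [ht'prod]
        exact h9
      have hw''len : (al ++ t' ++ be).length = al.length + t'.length + be.length := by
        simp only [List.length_append]
      have hge'' := lG_le_length hw''X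
      rw [hw''prod] at hge''
      have hw''geo : Geodesic X (al ++ t' ++ be) := by
        refine ⟨hw''X, ?_⟩
        rw [hw''prod]
        omega
      -- al is the corresponding prefix of u
      have htakeal : u.take al.length = al := by
        have h10 : al = (a ++ v).take al.length := by
          rw [← hab₂, List.append_assoc, List.take_left]
        have h11 : (a ++ v).take al.length = a.take al.length := by
          rw [List.take_append, Nat.sub_eq_zero_of_le (by omega),
            List.take_zero, List.append_nil]
        have h12 : u.take al.length = a.take al.length := by
          rw [← hau, List.take_append, Nat.sub_eq_zero_of_le (by omega),
            List.take_zero, List.append_nil]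
        rw [h12, ← h11, ← h10]
      have hLfin : al.length + t'.length + be.length = u.length - 1 := by
        have h14 := hw''geo.2
        rw [hw''prod] at h14
        omega
      refine ⟨u.length - al.length, t' ++ be, by omega, ?_, ?_, ?_, ?_⟩
      · -- length bound
        simp only [List.length_append]
        omega
      · intro y hy
        rcases List.mem_append.1 hy with hy | hy
        · exact ht'geo.1 y hy
        · exact hw'X y (by rw [← hab₂]; simp [hy])
      · have h13 : u.length - (u.length - al.length) = al.length := by omega
        rw [h13, htakeal, ← List.append_assoc]
        exact hw''geo
      · have h13 : u.length - (u.length - al.length) = al.length := by omega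
        rw [h13, htakeal, ← List.append_assoc]
        exact hw''prod


end Group


section FCon
variable {G : Type*} [Group G] {X : Set G}

/-- The word in `G` corresponding to a word over the alphabet `X`. -/
def vmap (X : Set G) (l : List ↥X) : List G := l.map Subtype.val

@[simp] lemma vmap_nil : vmap X ([] : List ↥X) = [] := rfl

@[simp] lemma vmap_append (l₁ l₂ : List ↥X) : vmap X (l₁ ++ l₂) = vmap X l₁ ++ vmap X l₂ := by
  simp only [vmap, List.map_append]

@[simp] lemma vmap_length (l : List ↥X) : (vmap X l).length = l.length := by
  simp only [vmap, List.length_map]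

@[simp] lemma vmap_take (n : ℕ) (l : List ↥X) : vmap X (l.take n) = (vmap X l).take n := by
  simp only [vmap, List.map_take]

@[simp] lemma vmap_singleton (a : ↥X) : vmap X [a] = [a.val] := rfl

@[simp] lemma vmap_cons (a : ↥X) (l : List ↥X) : vmap X (a :: l) = a.val :: vmap X l := rfl

lemma vmap_mem (l : List ↥X) : ∀ y ∈ vmap X l, y ∈ X := by
  intro y hy
  simp only [vmap, List.mem_map] at hy
  obtain ⟨a, _, rfl⟩ := hy
  exact a.2

lemma lift_word : ∀ {w : List G}, (∀ x ∈ w, x ∈ X) → ∃ l : List ↥X, vmap X l = w := by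
  intro w
  induction w with
  | nil => exact fun _ => ⟨[], rfl⟩
  | cons a t ih =>
    intro h
    obtain ⟨l, hl⟩ := ih (fun x hx => h x (by simp [hx]))
    exact ⟨⟨a, h a (by simp)⟩ :: l, congrArg (List.cons a) hl⟩

lemma suffix_of_suffix_le {β : Type*} {s₁ s₂ l : List β} (h₁ : s₁ <:+ l) (h₂ : s₂ <:+ l)
    (hle : s₁.length ≤ s₂.length) : s₁ <:+ s₂ := by
  have e₁ : s₁ = l.drop (l.length - s₁.length) := List.suffix_iff_eq_drop.1 h₁
  have e₂ : s₂ = l.drop (l.length - s₂.length) := List.suffix_iff_eq_drop.1 h₂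
  have hl₁ : s₁.length ≤ l.length := h₁.length_le
  have hl₂ : s₂.length ≤ l.length := h₂.length_le
  set n := s₂.length - s₁.length with hn
  have h3 : s₂.drop n = l.drop (n + (l.length - s₂.length)) := by
    conv_lhs => rw [e₂]
    rw [List.drop_drop]
    congr 1
    omega
  have h4 : n + (l.length - s₂.length) = l.length - s₁.length := by omega
  rw [h4, ← e₁] at h3
  rw [← h3]
  exact List.drop_suffix _ _

lemma suffix_append_right {β : Type*} {s t : List β} (h : s <:+ t) (l : List β) :
    s ++ l <:+ t ++ l := by
  obtain ⟨w, rfl⟩ := h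
  exact ⟨w, by rw [List.append_assoc]⟩

variable (X) in
/-- The property of being a valid transition table for the machine. -/
def GoodF (k : ℕ) (F0 : List ↥X → ↥X → ℕ × List ↥X) : Prop :=
  ∀ ω a, (F0 ω a).1 ≤ min ω.length (2 * k) ∧ (F0 ω a).2.length ≤ 2 * k + 1 ∧
    ∀ v : List ↥X, Geodesic X (vmap X v) → win (3 * k) v = ω →
      Geodesic X (vmap X (v.take (v.length - (F0 ω a).1) ++ (F0 ω a).2)) ∧
      (vmap X (v.take (v.length - (F0 ω a).1) ++ (F0 ω a).2)).prod = (vmap X v).prod * a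

lemma exists_goodF {k : ℕ} (hsym : ∀ x ∈ X, x⁻¹ ∈ X) (hgen : Subgroup.closure X = ⊤)
    (hle : LocallyExcluding X k {w : List G | Geodesic X w}) :
    ∃ F0 : List ↥X → ↥X → ℕ × List ↥X, GoodF X k F0 := by
  suffices h : ∀ ω : List ↥X, ∀ a : ↥X, ∃ dr : ℕ × List ↥X,
      dr.1 ≤ min ω.length (2 * k) ∧ dr.2.length ≤ 2 * k + 1 ∧
      ∀ v : List ↥X, Geodesic X (vmap X v) → win (3 * k) v = ω →
        Geodesic X (vmap X (v.take (v.length - dr.1) ++ dr.2)) ∧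
        (vmap X (v.take (v.length - dr.1) ++ dr.2)).prod = (vmap X v).prod * a by
    exact ⟨fun ω a => Classical.choose (h ω a), fun ω a => Classical.choose_spec (h ω a)⟩
  intro ω a
  by_cases hex : ∃ v : List ↥X, Geodesic X (vmap X v) ∧ win (3 * k) v = ω
  · obtain ⟨v₀, hv₀, hw₀⟩ := hex
    have hωgeo : Geodesic X (vmap X ω) := by
      have hsuf : win (3 * k) v₀ <:+ v₀ := win_suffix _ _
      rw [hw₀] at hsuf
      have h5 := hsuf.map (fun a : ↥X => (a : G))
      exact geodesic_infix hsym hgen hv₀ h5.isInfix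
    obtain ⟨d, r, hd, hrlen, hrX, hgeoB, hprodB⟩ :=
      lemmaB hsym hgen hle hωgeo (a.2 : (a : G) ∈ X)
    obtain ⟨r', hr'⟩ := lift_word hrX
    have hd' : d ≤ min ω.length (2 * k) := by simpa using hd
    have hr'len : r'.length ≤ 2 * k + 1 := by
      have := congrArg List.length hr'
      simp only [vmap_length] at this
      omega
    refine ⟨(d, r'), hd', hr'len, ?_⟩
    intro v hvgeo hwv
    have hsuf : ω <:+ v := by rw [← hwv]; exact win_suffix _ _
    obtain ⟨p, hp⟩ := hsuf
    have hdω : d ≤ ω.length := le_trans hd' (min_le_left _ _)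
    have hplen : p.length + ω.length = v.length := by
      simpa using congrArg List.length hp
    have htakev : v.take (v.length - d) = p ++ ω.take (ω.length - d) := by
      rw [← hp, List.take_append, List.take_of_length_le
        (by simp only [List.length_append]; omega)]
      congr 2
      simp only [List.length_append]
      omega
    have hBword : vmap X (ω.take (ω.length - d)) ++ vmap X r'
        = (vmap X ω).take ((vmap X ω).length - d) ++ r := by
      rw [hr', vmap_take, vmap_length]
    have hprodv : (vmap X (v.take (v.length - d) ++ r')).prod = (vmap X v).prod * a := by
      rw [htakev]
      have h1 : vmap X ((p ++ ω.take (ω.length - d)) ++ r')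
          = vmap X p ++ (vmap X (ω.take (ω.length - d)) ++ vmap X r') := by
        simp [List.append_assoc]
      rw [h1, hBword]
      rw [List.prod_append, hprodB]
      have h2 : (vmap X v).prod = (vmap X p).prod * (vmap X ω).prod := by
        rw [← hp, vmap_append, List.prod_append]
      rw [h2, mul_assoc]
    constructor
    · -- geodesicity
      by_cases hsmall : v.length ≤ 3 * k
      · have hveq : v = ω := by rw [← hwv, win_of_length_le hsmall]
        rw [hveq, vmap_append, hBword]
        exact hgeoB
      · -- big case: use locality
        push_neg at hsmall
        have hωlen : ω.length = 3 * k := by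
          rw [← hwv, win_length]
          omega
        apply local_to_global hle
        · intro y hy
          exact vmap_mem _ y hy
        · intro t hinf htlen
          have hsplit := infix_split (by
            rw [vmap_append, htakev] at hinf
            exact hinf :
            t <:+: vmap X (p ++ ω.take (ω.length - d)) ++ vmap X r')
          rcases hsplit with hA | ⟨A', hA's, hA'len, hA'inf⟩
          · -- inside the preserved prefix, hence factor of the geodesic v
            have h3 : vmap X (p ++ ω.take (ω.length - d)) <+: vmap X v := by
              rw [← htakev, vmap_take]
              exact List.take_prefix _ _
            exact geodesic_infix hsym hgen hvgeo (hA.trans h3.isInfix)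
          · -- crossing factor: inside the window result
            have hCsuf : vmap X (ω.take (ω.length - d)) <:+ vmap X (p ++ ω.take (ω.length - d)) := by
              rw [vmap_append]
              exact ⟨vmap X p, rfl⟩
            have hA'C : A' <:+ vmap X (ω.take (ω.length - d)) := by
              apply suffix_of_suffix_le hA's hCsuf
              have : (vmap X (ω.take (ω.length - d))).length = ω.length - d := by
                simp only [vmap_length, List.length_take]
                omega
              rw [this]
              omega
            have h4 : t <:+: vmap X (ω.take (ω.length - d)) ++ vmap X r' :=
              hA'inf.trans (suffix_append_right hA'C (vmap X r')).isInfix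
            rw [hBword] at h4
            exact geodesic_infix hsym hgen hgeoB h4
    · exact hprodv
  · refine ⟨(0, []), Nat.zero_le _, by simp, ?_⟩
    intro v hv hw
    exact absurd ⟨v, hv, hw⟩ hex

end FCon


section Machine2
variable {G : Type*} [Group G] {X : Set G} {k : ℕ}
variable (F0 : List ↥X → ↥X → ℕ × List ↥X)

variable (X) in
/-- Validity invariant for machine configurations. -/
def MValid (c : Config (↥X)) : Prop :=
  Geodesic X (vmap X c.2) ∧ ∀ q ∈ c.1, q.1 ≤ c.2.length ∧
    Geodesic X (vmap X (c.2.take (c.2.length - q.1) ++ q.2))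

variable (X) in
/-- The group value of a configuration. -/
def phi (c : Config (↥X)) : G :=
  match c.1 with
  | none => (vmap X c.2).prod
  | some (i, ρ) => (vmap X (c.2.take (c.2.length - i) ++ ρ)).prod

@[simp] lemma phi_none (v : List ↥X) : phi X (none, v) = (vmap X v).prod := rfl

lemma phi_some (i : ℕ) (ρ v : List ↥X) :
    phi X (some (i, ρ), v) = (vmap X (v.take (v.length - i) ++ ρ)).prod := rfl

lemma tr_inv (hsym : ∀ x ∈ X, x⁻¹ ∈ X) (hgen : Subgroup.closure X = ⊤)
    (hF : GoodF X k F0) {c c' : Config ↥X} {ℓ : Option ↥X}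
    (htr : Tr F0 (3 * k) c ℓ c') (hv : MValid X c) :
    MValid X c' ∧ phi X c' = phi X c * (vmap X ℓ.toList).prod := by
  cases htr with
  | inp v a =>
    obtain ⟨hd0, hr0, hspec⟩ := hF (win (3 * k) v) a
    obtain ⟨hgeo', hprod'⟩ := hspec v hv.1 rfl
    refine ⟨⟨hv.1, ?_⟩, ?_⟩
    · intro q hq
      cases hq
      constructor
      · show (F0 (win (3 * k) v) a).1 ≤ v.length
        have hwl : (win (3 * k) v).length ≤ v.length := by
          rw [win_length]; omega
        have h1 := le_trans hd0 (min_le_left _ _)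
        omega
      · exact hgeo'
    · show phi X (some (F0 (win (3 * k) v) a), v) = phi X (none, v) * (vmap X [a]).prod
      rw [phi_none]
      have hps : phi X (some (F0 (win (3 * k) v) a), v)
          = (vmap X (v.take (v.length - (F0 (win (3 * k) v) a).1)
              ++ (F0 (win (3 * k) v) a).2)).prod := rfl
      rw [hps, hprod']
      simp
  | pop i ρ z y =>
    obtain ⟨hle', hgeo⟩ := hv.2 (i + 1, ρ) rfl
    have hlen : (z ++ [y]).length = z.length + 1 := by simp
    have htk : (z ++ [y]).take ((z ++ [y]).length - (i + 1)) = z.take (z.length - i) := by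
      rw [hlen, List.take_append]
      have h0 : z.length + 1 - (i + 1) - z.length = 0 := by omega
      rw [h0, List.take_zero, List.append_nil]
      congr 1
      omega
    refine ⟨⟨?_, ?_⟩, ?_⟩
    · have hinf : vmap X z <:+: vmap X (z ++ [y]) := ⟨[], vmap X [y], by simp⟩
      exact geodesic_infix hsym hgen hv.1 hinf
    · intro q hq
      cases hq
      constructor
      · show i ≤ z.length
        rw [hlen] at hle'
        omega
      · rw [← htk]
        exact hgeo
    · rw [phi_some, phi_some, ← htk]
      simp
  | fin ρ v =>
    obtain ⟨_, hgeo⟩ := hv.2 (0, ρ) rfl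
    rw [Nat.sub_zero, List.take_length] at hgeo
    refine ⟨⟨hgeo, by intro q hq; cases hq⟩, ?_⟩
    rw [phi_none, phi_some, Nat.sub_zero, List.take_length]
    simp

lemma run_inv (hsym : ∀ x ∈ X, x⁻¹ ∈ X) (hgen : Subgroup.closure X = ⊤)
    (hF : GoodF X k F0) {n N : ℕ} {c c' : Config ↥X} {w : List ↥X}
    (h : Run F0 (3 * k) n N c w c') (hv : MValid X c) :
    MValid X c' ∧ phi X c' = phi X c * (vmap X w).prod := by
  induction h with
  | refl => exact ⟨hv, by simp⟩
  | step hle htr hrest ih =>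
    obtain ⟨hv₂, hphi₂⟩ := tr_inv F0 hsym hgen hF htr hv
    obtain ⟨hv₃, hphi₃⟩ := ih hv₂
    refine ⟨hv₃, ?_⟩
    rw [hphi₃, hphi₂, vmap_append, List.prod_append, mul_assoc]

lemma cascade : ∀ i : ℕ, ∀ ρ v : List ↥X, i ≤ v.length →
    ∃ N, Run F0 (3 * k) 0 N (some (i, ρ), v) [] (none, v.take (v.length - i) ++ ρ) := by
  intro i
  induction i with
  | zero =>
    intro ρ v _
    refine ⟨1, ?_⟩
    have h0 : Run F0 (3 * k) 0 (0 + 1) (some (0, ρ), v)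
        ((none : Option ↥X).toList ++ []) (none, v ++ ρ) :=
      Run.step (Nat.zero_le _) (Tr.fin ρ v) (Run.refl _)
    simpa [List.take_length] using h0
  | succ i ih =>
    intro ρ v hlen
    have hvne : v ≠ [] := by
      intro h; subst h; simp at hlen
    obtain ⟨N, hrun⟩ := ih ρ v.dropLast (by rw [List.length_dropLast]; omega)
    refine ⟨N + 1, ?_⟩
    have hstep : Tr F0 (3 * k) (some (i + 1, ρ), v.dropLast ++ [v.getLast hvne]) none
        (some (i, ρ), v.dropLast) := Tr.pop i ρ v.dropLast (v.getLast hvne)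
    rw [List.dropLast_append_getLast hvne] at hstep
    have hres := Run.step (Nat.zero_le _) hstep hrun
    have heq : v.dropLast.take (v.dropLast.length - i) = v.take (v.length - (i + 1)) := by
      rw [List.length_dropLast, List.dropLast_eq_take, List.take_take]
      congr 1
      omega
    rw [heq] at hres
    simpa using hres

lemma step_letter (hsym : ∀ x ∈ X, x⁻¹ ∈ X) (hgen : Subgroup.closure X = ⊤)
    (hF : GoodF X k F0) {v : List ↥X} (hv : MValid X (none, v)) (a : ↥X) :
    ∃ N v', Run F0 (3 * k) 0 N (none, v) [a] (none, v') ∧ MValid X (none, v') ∧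
      (vmap X v').prod = (vmap X v).prod * a := by
  have hstep : Tr F0 (3 * k) (none, v) (some a) (some (F0 (win (3 * k) v) a), v) :=
    Tr.inp v a
  have hd0 := (hF (win (3 * k) v) a).1
  have hwl : (win (3 * k) v).length ≤ v.length := by rw [win_length]; omega
  have hd1 : (F0 (win (3 * k) v) a).1 ≤ v.length := by
    have h1 := le_trans hd0 (min_le_left _ _)
    omega
  have hcas := cascade (k := k) F0 (F0 (win (3 * k) v) a).1 (F0 (win (3 * k) v) a).2 v hd1
  obtain ⟨N, hrun⟩ := hcas
  have hrun' : Run F0 (3 * k) 0 N (some (F0 (win (3 * k) v) a), v) []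
      (none, v.take (v.length - (F0 (win (3 * k) v) a).1) ++ (F0 (win (3 * k) v) a).2) := by
    exact hrun
  have htot := Run.step (Nat.zero_le _) hstep hrun'
  refine ⟨N + 1, _, by simpa using htot, ?_, ?_⟩
  · obtain ⟨hv', _⟩ := run_inv F0 hsym hgen hF htot hv
    exact hv'
  · obtain ⟨_, hphi⟩ := run_inv F0 hsym hgen hF htot hv
    rw [phi_none, phi_none] at hphi
    rw [hphi]
    simp

lemma machine_run (hsym : ∀ x ∈ X, x⁻¹ ∈ X) (hgen : Subgroup.closure X = ⊤)
    (hF : GoodF X k F0) : ∀ w v : List ↥X, MValid X (none, v) →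
    ∃ N v', Run F0 (3 * k) 0 N (none, v) w (none, v') ∧ MValid X (none, v') ∧
      (vmap X v').prod = (vmap X v).prod * (vmap X w).prod := by
  intro w
  induction w with
  | nil => exact fun v hv => ⟨0, v, Run.refl _, hv, by simp⟩
  | cons a t ih =>
    intro v hv
    obtain ⟨N₁, v₁, hr₁, hv₁, hp₁⟩ := step_letter F0 hsym hgen hF hv a
    obtain ⟨N₂, v₂, hr₂, hv₂, hp₂⟩ := ih v₁ hv₁
    refine ⟨N₁ + N₂, v₂, by simpa using hr₁.append hr₂, hv₂, ?_⟩
    rw [hp₂, hp₁]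
    simp [vmap_cons, mul_assoc]

lemma mvalid_nil : MValid X ((none : St ↥X), ([] : List ↥X)) :=
  ⟨geodesic_nil, by intro q hq; cases hq⟩

lemma run_iff (hsym : ∀ x ∈ X, x⁻¹ ∈ X) (hgen : Subgroup.closure X = ⊤)
    (hF : GoodF X k F0) (w : List ↥X) :
    (∃ N, Run F0 (3 * k) 0 N (none, ([] : List ↥X)) w (none, [])) ↔ (vmap X w).prod = 1 := by
  constructor
  · rintro ⟨N, hrun⟩
    obtain ⟨_, hphi⟩ := run_inv F0 hsym hgen hF hrun mvalid_nil
    have hphi' : (vmap X ([] : List ↥X)).prod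
        = (vmap X ([] : List ↥X)).prod * (vmap X w).prod := hphi
    simpa using hphi'.symm
  · intro hprod
    obtain ⟨N, V, hrun, hV, hp⟩ := machine_run F0 hsym hgen hF w [] mvalid_nil
    rw [hprod] at hp
    simp only [vmap_nil, List.prod_nil, one_mul] at hp
    have hVnil : V = [] := by
      have h1 := geodesic_prod_one hV.1 hp
      have h2 := congrArg List.length h1
      simp only [vmap_length] at h2
      exact List.eq_nil_of_length_eq_zero (by simpa using h2)
    rw [hVnil] at hrun
    exact ⟨N, hrun⟩

end Machine2

end WPCF


/-- If the geodesics of `G` over a finite symmetric generating set `X` are `k`-locally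
excluding, then the word problem of `G` over `X` (as a language over the alphabet `X`)
is accepted by a pushdown automaton; in particular it is context-free. -/
theorem wordProblem_isContextFree {G : Type*} [Group G] (X : Set G)
    (hfin : X.Finite) (hsym : ∀ x ∈ X, x⁻¹ ∈ X) (hgen : Subgroup.closure X = ⊤)
    (k : ℕ) (hk : 0 < k)
    (hle : LocallyExcluding X k {w : List G | Geodesic X w}) :
    Language.IsContextFree {w : List X | (w.map (fun a => (a : G))).prod = 1} := by
  classical
  haveI : Finite ↥X := hfin.to_subtype
  haveI : Fintype ↥X := Fintype.ofFinite _
  haveI : Encodable ↥X := Fintype.toEncodable _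
  obtain ⟨F0, hF⟩ := WPCF.exists_goodF hsym hgen hle
  have hdb : ∀ ω a, (F0 ω a).1 ≤ min ω.length (2 * k) := fun ω a => (hF ω a).1
  have hrb : ∀ ω a, (F0 ω a).2.length ≤ 2 * k + 1 := fun ω a => (hF ω a).2.1
  have hcoe : ∀ v : List X, (v.map (fun a => (a : G))) = WPCF.vmap X v := by
    intro v
    induction v with
    | nil => rfl
    | cons a t ih => exact congrArg (List.cons (a : G)) ih
  have hlang : (WPCF.gram F0 (3 * k) (2 * k)).language
      = {w : List X | (w.map (fun a => (a : G))).prod = 1} := by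
    ext w
    constructor
    · intro hw
      obtain ⟨N, hrun⟩ := WPCF.language_sound F0 (3 * k) (2 * k) hw
      have h1 := (WPCF.run_iff F0 hsym hgen hF w).1 ⟨N, hrun⟩
      show (w.map (fun a => (a : G))).prod = 1
      rw [hcoe w]
      exact h1
    · intro hw
      have hw' : (w.map (fun a => (a : G))).prod = 1 := hw
      rw [hcoe w] at hw'
      obtain ⟨N, hrun⟩ := (WPCF.run_iff F0 hsym hgen hF w).2 hw'
      exact WPCF.language_complete F0 (3 * k) (2 * k) hdb hrb hrun
  exact ⟨WPCF.mapGram (WPCF.gram F0 (3 * k) (2 * k))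
      ((Encodable.encode : WPCF.NTt ↥X → ℕ)),
    by rw [WPCF.mapGram_language (WPCF.gram F0 (3 * k) (2 * k))
        (Encodable.encode_injective (α := WPCF.NTt ↥X)), hlang]⟩
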